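/- Let d_s ≥ 1, let ϖ' ∈ (0,1] satisfy (ϖ')² + ϖ' - 1 > 0, and let 0 < ϑ < ((ϖ')² + ϖ' - 1)/(2·d_s·(1 + ϖ')). Then there exists ς₀ > 0 such that for every ς ∈ (0, ς₀) and every r ∈ (0,1], setting ρ = r^{1+ϖ'-ς/2}, |b| = r^{-2-ϖ'+ς}, and ϱ = r^{(1+ς/d_s)/(1-ϑ)}, one has ρ^{ϑ d_s} · |b|^{ϖ'} · ϱ^{ϖ'} · r^{1+ς} ≥ r^{-ς}. -/

import Mathlib

open Real

/-- Key exponent computation in the proof of Theorem main2 of the errata: with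
`ρ = r^{1+ϖ'-ς/2}`, `|b| = r^{-2-ϖ'+ς}` and `ϱ = r^{(1+ς/d_s)/(1-ϑ)}`, the quantity
`ρ^{ϑ d_s} |b|^{ϖ'} ϱ^{ϖ'} r^{1+ς}` is at least `r^{-ς}`, provided the golden-ratio
condition holds, `ϑ < ((ϖ')² + ϖ' - 1)/(2 d_s (1 + ϖ'))` and `ς` is small enough. -/
theorem disc_counting_exponent
    (d_s : ℕ) (hd : 1 ≤ d_s) (ϖ' ϑ : ℝ) (hϖ : ϖ' ∈ Set.Ioc (0 : ℝ) 1)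
    (hgold : ϖ' ^ 2 + ϖ' - 1 > 0)
    (hϑ0 : 0 < ϑ) (hϑ : ϑ < (ϖ' ^ 2 + ϖ' - 1) / (2 * (d_s : ℝ) * (1 + ϖ'))) :
    ∃ ς₀ > (0 : ℝ), ∀ ς ∈ Set.Ioo (0 : ℝ) ς₀, ∀ r ∈ Set.Ioc (0 : ℝ) 1,
      (r ^ (1 + ϖ' - ς / 2)) ^ (ϑ * (d_s : ℝ)) * (r ^ (-2 - ϖ' + ς)) ^ ϖ' *
        (r ^ ((1 + ς / (d_s : ℝ)) / (1 - ϑ))) ^ ϖ' * r ^ (1 + ς) ≥ r ^ (-ς) := by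
  obtain ⟨hϖ0, hϖ1⟩ := hϖ
  set D : ℝ := (d_s : ℝ) with hDdef
  have hD : (1:ℝ) ≤ D := by rw [hDdef]; exact_mod_cast hd
  have hD0 : (0:ℝ) < D := by linarith
  have hM : (0:ℝ) < 2 * D * (1 + ϖ') := by positivity
  have key : ϑ * (2 * D * (1 + ϖ')) < ϖ' ^ 2 + ϖ' - 1 := (lt_div_iff₀ hM).mp hϑ
  have hg1 : ϖ' ^ 2 + ϖ' - 1 ≤ 1 := by nlinarith
  have hϑ2 : ϑ < 1/2 := by nlinarith [mul_pos hϑ0 hD0, mul_pos hϑ0 (mul_pos hD0 hϖ0)]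
  have h1ϑ : (0:ℝ) < 1 - ϑ := by linarith
  -- E0' = (value of exponent sum + ς at ς = 0) times D(1-ϑ)
  set E0' : ℝ := (ϑ * D * (1 + ϖ') - ϖ' * (2 + ϖ') + 1) * (D * (1 - ϑ)) + ϖ' * D with hE0'
  have hDne : D ≠ 0 := ne_of_gt hD0
  have h1ϑne : (1 - ϑ) ≠ 0 := ne_of_gt h1ϑ
  have h1 : 2 * ϖ' + (ϖ' ^ 2 + ϖ' - 1) ≤ 2 * D * (1 + ϖ') := by
    nlinarith [mul_nonneg (sub_nonneg.mpr hD) (by linarith : (0:ℝ) ≤ 1 + ϖ')]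
  have h3 : ϑ * (2 * ϖ' + (ϖ' ^ 2 + ϖ' - 1)) < ϖ' ^ 2 + ϖ' - 1 :=
    lt_of_le_of_lt (mul_le_mul_of_nonneg_left h1 hϑ0.le) key
  have hstep : (ϑ * D * (1 + ϖ') - ϖ' * (2 + ϖ') + 1) * (1 - ϑ) + ϖ' < 0 := by
    nlinarith [mul_pos (show (0:ℝ) < (ϖ' ^ 2 + ϖ' - 1) - 2 * (ϑ * D * (1 + ϖ')) by
      linarith) h1ϑ]
  have hE0neg : E0' < 0 := by
    rw [hE0']
    nlinarith [mul_neg_of_pos_of_neg hD0 hstep]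
  refine ⟨-E0' / (5 * (D * (1 - ϑ))), div_pos (by linarith) (by positivity), ?_⟩
  rintro ς ⟨hς0, hςlt⟩ r ⟨hr0, hr1⟩
  have hςE : 5 * (D * (1 - ϑ)) * ς < -E0' := by
    rw [div_eq_mul_inv] at hςlt
    calc 5 * (D * (1 - ϑ)) * ς < 5 * (D * (1 - ϑ)) * (-E0' * (5 * (D * (1 - ϑ)))⁻¹) := by
          apply mul_lt_mul_of_pos_left hςlt (by positivity)
      _ = -E0' := by field_simp
  -- c' ≤ 5 D (1-ϑ)
  have hc : D * (1 - ϑ) * (-(ϑ * D) / 2 + ϖ' + 2) + ϖ' ≤ 5 * (D * (1 - ϑ)) := by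
    nlinarith [mul_pos hD0 h1ϑ, mul_pos hϑ0 hD0, mul_nonneg (mul_pos hD0 h1ϑ).le
      (mul_pos hϑ0 hD0).le]
  -- exponent inequality
  have hE : (1 + ϖ' - ς / 2) * (ϑ * D) + (-2 - ϖ' + ς) * ϖ' +
      (1 + ς / D) / (1 - ϑ) * ϖ' + (1 + ς) ≤ -ς := by
    rw [← sub_nonpos]
    have hq : (1 + ς / D) / (1 - ϑ) * (D * (1 - ϑ)) = D + ς := by
      field_simp
    have hDq : (0:ℝ) < D * (1 - ϑ) := mul_pos hD0 h1ϑ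
    rw [← mul_le_mul_iff_of_pos_right hDq, zero_mul]
    have expand : ((1 + ϖ' - ς / 2) * (ϑ * D) + (-2 - ϖ' + ς) * ϖ' +
        (1 + ς / D) / (1 - ϑ) * ϖ' + (1 + ς) - -ς) * (D * (1 - ϑ)) =
        E0' + ς * (D * (1 - ϑ) * (-(ϑ * D) / 2 + ϖ' + 2) + ϖ') := by
      rw [hE0']; field_simp; ring
    rw [expand]
    linarith [mul_le_mul_of_nonneg_left hc hς0.le]
  calc r ^ (-ς) ≤ r ^ ((1 + ϖ' - ς / 2) * (ϑ * D) + (-2 - ϖ' + ς) * ϖ' +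
        (1 + ς / D) / (1 - ϑ) * ϖ' + (1 + ς)) :=
        Real.rpow_le_rpow_of_exponent_ge hr0 hr1 hE
    _ = (r ^ (1 + ϖ' - ς / 2)) ^ (ϑ * D) * (r ^ (-2 - ϖ' + ς)) ^ ϖ' *
        (r ^ ((1 + ς / D) / (1 - ϑ))) ^ ϖ' * r ^ (1 + ς) := by
        rw [Real.rpow_add hr0, Real.rpow_add hr0, Real.rpow_add hr0,
          Real.rpow_mul hr0.le, Real.rpow_mul hr0.le, Real.rpow_mul hr0.le]
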